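/- Suppose F : [T1, T2] → R is continuously differentiable with Lipschitz continuous derivative F', F ≥ 0 on [T1,T2], F(T1) = 0, and F''(t) ≤ p F(t) + q for almost every t ∈ [T1,T2], where p, q > 0. Then for every t ∈ [T1, T2], F'(t) ≤ (q/√p + F'(T1)) · exp(√p (t - T1)). -/

import Mathlib

open MeasureTheory Set Filter
open scoped Topology NNReal

/-- Difference quotients along `1/(n+1)` tend to the derivative. -/
lemma tendsto_quot_of_hasDerivAt {g : ℝ → ℝ} {t d : ℝ} (h : HasDerivAt g d t) :
    Tendsto (fun n : ℕ => (g (t + ((n : ℝ) + 1)⁻¹) - g t) / ((n : ℝ) + 1)⁻¹) atTop (𝓝 d) := by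
  have hslope := hasDerivAt_iff_tendsto_slope.1 h
  have hseq : Tendsto (fun n : ℕ => t + ((n : ℝ) + 1)⁻¹) atTop (𝓝[≠] t) := by
    apply tendsto_nhdsWithin_of_tendsto_nhds_of_eventually_within
    · have h0 : Tendsto (fun n : ℕ => ((n : ℝ) + 1)⁻¹) atTop (𝓝 0) := by
        simpa [one_div] using tendsto_one_div_add_atTop_nhds_zero_nat (𝕜 := ℝ)
      simpa using tendsto_const_nhds.add h0
    · filter_upwards with n
      have hpos : (0 : ℝ) < ((n : ℝ) + 1)⁻¹ := by positivity
      simp only [mem_compl_iff, mem_singleton_iff]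
      intro hcontra
      nlinarith [hcontra]
  have hcomp := hslope.comp hseq
  convert hcomp using 2 with n
  have hpos : (0 : ℝ) < ((n : ℝ) + 1)⁻¹ := by positivity
  simp [Function.comp, slope_def_field]

/-- Fundamental theorem of calculus for Lipschitz functions on `ℝ`. -/
lemma lipschitz_eq_integral_deriv {K : ℝ≥0} {g : ℝ → ℝ} (hg : LipschitzWith K g)
    {x y : ℝ} (hxy : x ≤ y) :
    g y - g x = ∫ t in Set.Ioc x y, deriv g t := by
  set δ : ℕ → ℝ := fun n => ((n : ℝ) + 1)⁻¹ with hδdef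
  have hδpos : ∀ n, 0 < δ n := fun n => by positivity
  have gc : Continuous g := hg.continuous
  have gint : ∀ a b : ℝ, IntervalIntegrable g volume a b := fun a b => gc.intervalIntegrable a b
  set H : ℝ → ℝ := fun t => ∫ u in x..t, g u with hHdef
  have Hderiv : ∀ z : ℝ, HasDerivAt H (g z) z := fun z =>
    intervalIntegral.integral_hasDerivAt_right (gint x z)
      gc.stronglyMeasurable.aestronglyMeasurable.stronglyMeasurableAtFilter gc.continuousAt
  set Q : ℕ → ℝ → ℝ := fun n t => (g (t + δ n) - g t) / δ n with hQdef
  have key : ∀ n, ∫ t in x..y, Q n t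
      = (H (y + δ n) - H y) / δ n - (H (x + δ n) - H x) / δ n := by
    intro n
    have h1 : (∫ t in x..y, g (t + δ n)) = ∫ t in (x + δ n)..(y + δ n), g t :=
      intervalIntegral.integral_comp_add_right g (δ n)
    have hints : IntervalIntegrable (fun t => g (t + δ n)) volume x y :=
      (gc.comp (continuous_add_right (δ n))).intervalIntegrable x y
    have h2 : ∫ t in x..y, Q n t
        = ((∫ t in (x + δ n)..(y + δ n), g t) - ∫ t in x..y, g t) / δ n := by
      rw [← h1, ← intervalIntegral.integral_sub hints (gint x y), ← intervalIntegral.integral_div]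
    have h3 : (∫ t in x..(y + δ n), g t) - ∫ t in x..(x + δ n), g t
        = ∫ t in (x + δ n)..(y + δ n), g t :=
      intervalIntegral.integral_interval_sub_left (gint x (y + δ n)) (gint x (x + δ n))
    rw [h2, ← h3]
    simp only [H, intervalIntegral.integral_same]
    ring
  have T1 : Tendsto (fun n => ∫ t in x..y, Q n t) atTop (𝓝 (g y - g x)) := by
    have hy' := tendsto_quot_of_hasDerivAt (Hderiv y)
    have hx' := tendsto_quot_of_hasDerivAt (Hderiv x)
    have := hy'.sub hx'
    apply Tendsto.congr' _ this
    filter_upwards with n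
    rw [key n]
  have T2 : Tendsto (fun n => ∫ t in Set.Ioc x y, Q n t) atTop
      (𝓝 (∫ t in Set.Ioc x y, deriv g t)) := by
    apply tendsto_integral_of_dominated_convergence (fun _ => (K : ℝ))
    · intro n
      exact (((gc.comp (continuous_add_right (δ n))).sub gc).div_const _).aestronglyMeasurable
    · exact (integrableOn_const measure_Ioc_lt_top.ne)
    · intro n
      filter_upwards with t
      have hd : dist (g (t + δ n)) (g t) ≤ (K : ℝ) * dist (t + δ n) t := hg.dist_le_mul _ _
      rw [Real.dist_eq, Real.dist_eq] at hd
      have h1 : |t + δ n - t| = δ n := by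
        rw [add_sub_cancel_left, abs_of_pos (hδpos n)]
      rw [h1] at hd
      rw [Real.norm_eq_abs, abs_div, abs_of_pos (hδpos n), div_le_iff₀ (hδpos n)]
      exact hd
    · filter_upwards [ae_restrict_of_ae hg.ae_differentiableAt] with t ht
      exact tendsto_quot_of_hasDerivAt ht.hasDerivAt
  exact tendsto_nhds_unique (T1.congr fun n => intervalIntegral.integral_of_le hxy) T2

/-- The derivative of a Lipschitz function is bounded by the Lipschitz constant. -/
lemma abs_deriv_le_of_lipschitz {K : ℝ≥0} {g : ℝ → ℝ} (hg : LipschitzWith K g) (t : ℝ) :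
    |deriv g t| ≤ (K : ℝ) := by
  by_cases hd : DifferentiableAt ℝ g t
  · have h := hasDerivAt_iff_tendsto_slope.1 hd.hasDerivAt
    have habs : Tendsto (fun z => |slope g t z|) (𝓝[≠] t) (𝓝 |deriv g t|) :=
      h.abs
    apply le_of_tendsto habs
    filter_upwards [self_mem_nhdsWithin] with z hz
    have hzt : z ≠ t := hz
    have hd' : dist (g z) (g t) ≤ (K : ℝ) * dist z t := hg.dist_le_mul _ _
    rw [Real.dist_eq, Real.dist_eq] at hd'
    rw [slope_def_field, abs_div]
    rw [div_le_iff₀ (by simpa [sub_eq_zero] using hzt : (0:ℝ) < |z - t|)]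
    exact hd'
  · rw [deriv_zero_of_not_differentiableAt hd]
    simp

theorem second_order_gronwall (T1 T2 : ℝ) (hT : T1 < T2)
    (F F' : ℝ → ℝ) (p q : ℝ) (hp : 0 < p) (hq : 0 < q) (K : NNReal)
    (hderiv : ∀ t ∈ Set.Icc T1 T2, HasDerivAt F (F' t) t)
    (hLip : LipschitzOnWith K F' (Set.Icc T1 T2))
    (hFpos : ∀ t ∈ Set.Icc T1 T2, 0 ≤ F t)
    (hF0 : F T1 = 0)
    (hsecond : ∀ᵐ t ∂volume, t ∈ Set.Icc T1 T2 →
      ∃ F'' : ℝ, HasDerivAt F' F'' t ∧ F'' ≤ p * F t + q) :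
    ∀ t ∈ Set.Icc T1 T2,
      F' t ≤ (q / Real.sqrt p + F' T1) * Real.exp (Real.sqrt p * (t - T1)) := by
  obtain ⟨g, hgl, hgeq⟩ := hLip.extend_real
  set sp := Real.sqrt p with hspdef
  have hsp0 : 0 < sp := Real.sqrt_pos.2 hp
  have hspsq : sp * sp = p := Real.mul_self_sqrt hp.le
  have hFc : ContinuousOn F (Set.Icc T1 T2) := fun t ht =>
    (hderiv t ht).continuousAt.continuousWithinAt
  have hF'c : ContinuousOn F' (Set.Icc T1 T2) := hLip.continuousOn
  have hφc : ContinuousOn (fun t => p * F t + q) (Set.Icc T1 T2) :=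
    (continuousOn_const.mul hFc).add continuousOn_const
  -- key increment inequality for F'
  have key : ∀ x ∈ Set.Icc T1 T2, ∀ y ∈ Set.Icc T1 T2, x ≤ y →
      F' y - F' x ≤ ∫ t in x..y, (p * F t + q) := by
    intro x hx y hy hxy
    have h1 : g y - g x = ∫ t in Set.Ioc x y, deriv g t := lipschitz_eq_integral_deriv hgl hxy
    have hne : ∀ᵐ t : ℝ ∂volume, t ≠ T2 := by
      rw [ae_iff]
      simp only [not_not, Set.setOf_eq_eq_singleton]
      exact measure_singleton T2
    have hmono : ∫ t in Set.Ioc x y, deriv g t ≤ ∫ t in Set.Ioc x y, (p * F t + q) := by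
      apply integral_mono_ae
      · apply Integrable.mono' (g := fun _ => (K : ℝ))
          (integrableOn_const measure_Ioc_lt_top.ne)
        · exact (measurable_deriv g).aestronglyMeasurable
        · filter_upwards with t
          exact abs_deriv_le_of_lipschitz hgl t
      · exact ((hφc.mono (Set.Icc_subset_Icc hx.1 hy.2)).integrableOn_Icc).mono_set
          Set.Ioc_subset_Icc_self
      · filter_upwards [ae_restrict_of_ae hsecond, ae_restrict_mem measurableSet_Ioc,
          ae_restrict_of_ae hne] with t ht2 ht hne2
        have htIcc : t ∈ Set.Icc T1 T2 := ⟨hx.1.trans ht.1.le, ht.2.trans hy.2⟩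
        obtain ⟨F'', hd, hb⟩ := ht2 htIcc
        have htIoo : t ∈ Set.Ioo T1 T2 :=
          ⟨hx.1.trans_lt ht.1, lt_of_le_of_ne htIcc.2 hne2⟩
        have heq : g =ᶠ[𝓝 t] F' := by
          filter_upwards [Ioo_mem_nhds htIoo.1 htIoo.2] with z hz
          exact (hgeq (Set.Ioo_subset_Icc_self hz)).symm
        have hd' : HasDerivAt g F'' t := hd.congr_of_eventuallyEq heq
        rw [hd'.deriv]
        exact hb
    have h2 : F' y - F' x = g y - g x := by rw [hgeq hx, hgeq hy]
    rw [h2, h1, intervalIntegral.integral_of_le hxy]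
    exact hmono
  set G : ℝ → ℝ := fun t => F' t + sp * F t with hGdef
  have hGc : ContinuousOn G (Set.Icc T1 T2) := hF'c.add (continuousOn_const.mul hFc)
  -- increment inequality for G
  have hGkey : ∀ x ∈ Set.Icc T1 T2, ∀ y ∈ Set.Icc T1 T2, x ≤ y →
      G y - G x ≤ ∫ t in x..y, (sp * G t + q) := by
    intro x hx y hy hxy
    have huIcc : Set.uIcc x y ⊆ Set.Icc T1 T2 := by
      rw [Set.uIcc_of_le hxy]
      exact Set.Icc_subset_Icc hx.1 hy.2
    have hint1 : IntervalIntegrable (fun t => p * F t + q) volume x y :=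
      (hφc.mono huIcc).intervalIntegrable
    have hint2 : IntervalIntegrable F' volume x y := (hF'c.mono huIcc).intervalIntegrable
    have h1 := key x hx y hy hxy
    have h2 : F y - F x = ∫ t in x..y, F' t := by
      symm
      apply intervalIntegral.integral_eq_sub_of_hasDerivAt
      · intro t ht
        exact hderiv t (huIcc ht)
      · exact hint2
    have h3 : (∫ t in x..y, (p * F t + q)) + sp * ∫ t in x..y, F' t
        = ∫ t in x..y, (sp * G t + q) := by
      rw [← intervalIntegral.integral_const_mul, ← intervalIntegral.integral_add hint1
        (hint2.const_mul sp)]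
      apply intervalIntegral.integral_congr
      intro t _
      simp only [G]
      rw [← hspsq]
      ring
    calc G y - G x = (F' y - F' x) + sp * (F y - F x) := by simp only [G]; ring
      _ ≤ (∫ t in x..y, (p * F t + q)) + sp * ∫ t in x..y, F' t := by
          rw [h2]
          nlinarith [hsp0]
      _ = ∫ t in x..y, (sp * G t + q) := h3
  -- slope condition for Gronwall
  have hslope : ∀ x ∈ Set.Ico T1 T2, ∀ r, sp * G x + q < r →
      ∃ᶠ z in 𝓝[>] x, (z - x)⁻¹ * (G z - G x) < r := by
    intro x hx r hr
    apply Filter.Eventually.frequently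
    set ψ : ℝ → ℝ := fun t => sp * G t + q with hψdef
    have hψc : ContinuousWithinAt ψ (Set.Icc T1 T2) x :=
      ((continuousOn_const.mul hGc).add continuousOn_const) x ⟨hx.1, hx.2.le⟩
    set r' := (ψ x + r) / 2 with hr'def
    have hr'1 : ψ x < r' := by simp only [r']; linarith [hr]
    have hr'2 : r' < r := by simp only [r']; linarith [hr]
    have hev : ∀ᶠ t in 𝓝[Set.Icc T1 T2] x, ψ t < r' := hψc.eventually_lt_const hr'1
    obtain ⟨U, hUo, hxU, hU⟩ := mem_nhdsWithin.1 hev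
    obtain ⟨ε, hε0, hball⟩ := Metric.isOpen_iff.1 hUo x hxU
    have hmem : Set.Ioo x (min (x + ε) T2) ∈ 𝓝[>] x :=
      Ioo_mem_nhdsGT (lt_min (by linarith) hx.2)
    filter_upwards [hmem] with z hz
    have hzT2 : z < T2 := hz.2.trans_le (min_le_right _ _)
    have hzε : z < x + ε := hz.2.trans_le (min_le_left _ _)
    have hzIcc : z ∈ Set.Icc T1 T2 := ⟨hx.1.trans hz.1.le, hzT2.le⟩
    have hψlt : ∀ t ∈ Set.Icc x z, ψ t < r' := by
      intro t ht
      apply hU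
      constructor
      · apply hball
        rw [Metric.mem_ball, Real.dist_eq, abs_lt]
        constructor <;> [linarith [ht.1]; linarith [ht.2, hz.1]]
      · exact ⟨hx.1.trans ht.1, ht.2.trans hzT2.le⟩
    have hGz := hGkey x ⟨hx.1, hx.2.le⟩ z hzIcc hz.1.le
    have hψint : IntervalIntegrable ψ volume x z := by
      apply ContinuousOn.intervalIntegrable
      apply ((continuousOn_const.mul hGc).add continuousOn_const).mono
      rw [Set.uIcc_of_le hz.1.le]
      exact Set.Icc_subset_Icc hx.1 hzT2.le
    have hintle : ∫ t in x..z, ψ t ≤ ∫ t in x..z, r' := by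
      apply intervalIntegral.integral_mono_on hz.1.le hψint intervalIntegrable_const
      intro t ht
      exact (hψlt t ht).le
    have hconst : (∫ _t in x..z, r') = (z - x) * r' := by
      rw [intervalIntegral.integral_const, smul_eq_mul]
    have hzx : 0 < z - x := by linarith [hz.1]
    have hfinal : G z - G x ≤ (z - x) * r' := by
      calc G z - G x ≤ ∫ t in x..z, ψ t := hGz
        _ ≤ ∫ _t in x..z, r' := hintle
        _ = (z - x) * r' := hconst
    calc (z - x)⁻¹ * (G z - G x) ≤ (z - x)⁻¹ * ((z - x) * r') := by
          apply mul_le_mul_of_nonneg_left hfinal (inv_nonneg.2 hzx.le)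
      _ = r' := by field_simp
      _ < r := hr'2
  -- apply Gronwall
  have hgron := le_gronwallBound_of_liminf_deriv_right_le (f := G)
    (f' := fun t => sp * G t + q) (δ := F' T1) (K := sp) (ε := q) (a := T1) (b := T2)
    hGc hslope (by simp only [G]; rw [hF0]; simp) (fun x _ => le_rfl)
  intro t ht
  have hGt := hgron t ht
  rw [gronwallBound_of_K_ne_0 hsp0.ne'] at hGt
  have hFt : F' t ≤ G t := by
    have hpos := hFpos t ht
    simp only [G]
    nlinarith [hsp0]
  have hqsp : 0 ≤ q / sp := by positivity
  have hexp : (1 : ℝ) ≤ Real.exp (sp * (t - T1)) := by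
    apply Real.one_le_exp
    have := ht.1
    nlinarith [hsp0]
  calc F' t ≤ G t := hFt
    _ ≤ F' T1 * Real.exp (sp * (t - T1)) + q / sp * (Real.exp (sp * (t - T1)) - 1) := hGt
    _ ≤ (q / sp + F' T1) * Real.exp (sp * (t - T1)) := by nlinarith [hqsp, hexp]
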